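/- Fix n ≠ 0 and constants α, C ∈ ℝ with C - (αn + 2) t > 0 and x > 0 on an open set Ω ⊆ ℝ × ℝ. Then u(t, x) := (1/n) · log( x² / (C - (αn + 2) t) ) is a solution on Ω of the PDE u_t = (e^{n u} u_x)_x + α x^{-2} e^{n u}. -/

import Mathlib

/-- u = (1/n) log(x²/(C-(αn+2)t)) solves
u_t = (e^{nu}u_x)_x + α x^{-2} e^{nu} on Ω. -/
theorem stmt1 (n α C : ℝ) (hn : n ≠ 0) (Ω : Set (ℝ × ℝ)) (hΩ : IsOpen Ω)
    (hden : ∀ p ∈ Ω, 0 < C - (α * n + 2) * p.1)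
    (hx : ∀ p ∈ Ω, 0 < p.2)
    (u : ℝ → ℝ → ℝ)
    (hu : ∀ t x, u t x = (1 / n) * Real.log (x ^ 2 / (C - (α * n + 2) * t))) :
    ∀ p ∈ Ω, deriv (fun s => u s p.2) p.1 =
      deriv (fun y => Real.exp (n * u p.1 y) * deriv (fun z => u p.1 z) y) p.2
        + α / p.2 ^ 2 * Real.exp (n * u p.1 p.2) := by
  rintro ⟨t₀, x₀⟩ hp
  have hd : 0 < C - (α * n + 2) * t₀ := hden _ hp
  have hx₀ : 0 < x₀ := hx _ hp
  set k : ℝ := α * n + 2 with hk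
  set D : ℝ := C - k * t₀ with hD
  have hDne : D ≠ 0 := ne_of_gt hd
  -- time derivative
  have htime : deriv (fun s => u s x₀) t₀ = k / (n * D) := by
    have hfun : (fun s => u s x₀) = fun s => (1 / n) * Real.log (x₀ ^ 2 / (C - k * s)) := by
      funext s; rw [hu]
    rw [hfun]
    have h1 : HasDerivAt (fun s => C - k * s) (-k) t₀ := by
      simpa using (((hasDerivAt_id t₀).const_mul k).const_sub C)
    have hinner : HasDerivAt (fun s => x₀ ^ 2 / (C - k * s)) (x₀ ^ 2 * k / D ^ 2) t₀ := by
      have := (hasDerivAt_const t₀ (x₀ ^ 2)).div h1 (by rw [← hD]; exact hDne)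
      refine this.congr_deriv ?_
      rw [← hD]
      field_simp
      ring
    have hval : x₀ ^ 2 / D ≠ 0 := ne_of_gt (by positivity)
    have hlog := (Real.hasDerivAt_log hval).comp t₀ (by simpa [← hD] using hinner)
    have := hlog.const_mul (1 / n)
    simp only [Function.comp] at this
    rw [this.deriv]
    field_simp
  -- spatial derivative of u
  have hsp : ∀ y : ℝ, y ≠ 0 → deriv (fun z => u t₀ z) y = 2 / (n * y) := by
    intro y hy
    have hfun : (fun z => u t₀ z) = fun z => (1 / n) * Real.log (z ^ 2 / D) := by
      funext z; rw [hu, ← hD]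
    rw [hfun]
    have hinner : HasDerivAt (fun z => z ^ 2 / D) (2 * y / D) y := by
      have := (hasDerivAt_pow 2 y).div_const D
      simpa [mul_comm] using this
    have hval : y ^ 2 / D ≠ 0 := by
      have : (0:ℝ) < y ^ 2 / D := by positivity
      exact ne_of_gt this
    have hlog := (Real.hasDerivAt_log hval).comp y hinner
    have := hlog.const_mul (1 / n)
    simp only [Function.comp] at this
    rw [this.deriv]
    field_simp
  -- the flux function equals a linear function near x₀
  have hg : (fun y => Real.exp (n * u t₀ y) * deriv (fun z => u t₀ z) y)
      =ᶠ[nhds x₀] (fun y => (2 / (n * D)) * y) := by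
    filter_upwards [isOpen_Ioi.mem_nhds hx₀] with y hy
    have hy0 : y ≠ 0 := ne_of_gt hy
    rw [hsp y hy0, hu, ← hD]
    have harg : n * (1 / n * Real.log (y ^ 2 / D)) = Real.log (y ^ 2 / D) := by
      field_simp
    rw [harg, Real.exp_log (by positivity)]
    field_simp
  have hflux : deriv (fun y => Real.exp (n * u t₀ y) * deriv (fun z => u t₀ z) y) x₀
      = 2 / (n * D) := by
    rw [hg.deriv_eq]
    simpa using (((hasDerivAt_id x₀).const_mul (2 / (n * D))).deriv)
  have hexp : Real.exp (n * u t₀ x₀) = x₀ ^ 2 / D := by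
    rw [hu, ← hD]
    have harg : n * (1 / n * Real.log (x₀ ^ 2 / D)) = Real.log (x₀ ^ 2 / D) := by
      field_simp
    rw [harg, Real.exp_log (by positivity)]
  simp only [htime, hflux, hexp]
  rw [hk]
  field_simp
  ring
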